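/- Let G = (V, E) be a finite simple graph in which every vertex u carries a weight w_u > 0, and set W_u := Σ_{v∈N(u)∪{u}} w_v. Then Σ_{v∈V} w_v / W_v ≤ α(G), where α(G) is the independence number of G. -/

import Mathlib

open Finset

/-- The independence number of a finite simple graph: the largest cardinality of a set of
pairwise non-adjacent vertices. -/
noncomputable def indepNum {V : Type*} [Fintype V] (G : SimpleGraph V) : ℕ :=
  sSup {n | ∃ s : Finset V, (∀ a ∈ s, ∀ b ∈ s, a ≠ b → ¬ G.Adj a b) ∧ s.card = n}

private lemma caro_wei_key {V : Type*} [Fintype V] [DecidableEq V] (G : SimpleGraph V)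
    [DecidableRel G.Adj] (w : V → ℝ) (hw : ∀ v, 0 < w v) (s : Finset V) :
    ∃ t : Finset V, t ⊆ s ∧ (∀ a ∈ t, ∀ b ∈ t, a ≠ b → ¬ G.Adj a b) ∧
      ∑ v ∈ s, w v / (w v + ∑ x ∈ G.neighborFinset v ∩ s, w x) ≤ (t.card : ℝ) := by
  induction s using Finset.strongInduction with
  | _ s ih =>
    rcases s.eq_empty_or_nonempty with rfl | hne
    · exact ⟨∅, by simp⟩
    · set g : V → ℝ := fun v => w v + ∑ x ∈ G.neighborFinset v ∩ s, w x with hg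
      have hgpos : ∀ v, 0 < g v := fun v =>
        add_pos_of_pos_of_nonneg (hw v) (Finset.sum_nonneg fun x _ => (hw x).le)
      obtain ⟨u, hus, hmin⟩ := s.exists_min_image g hne
      set T : Finset V := insert u (G.neighborFinset u ∩ s) with hT
      have hTs : T ⊆ s := by
        intro x hx
        rcases Finset.mem_insert.1 hx with rfl | hx
        · exact hus
        · exact (Finset.mem_inter.1 hx).2
      have huT : u ∈ T := Finset.mem_insert_self _ _
      have hss : s \ T ⊂ s := Finset.sdiff_ssubset hTs ⟨u, huT⟩
      obtain ⟨t, hts, hind, hle⟩ := ih (s \ T) hss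
      have hut : u ∉ t := fun h => (Finset.mem_sdiff.1 (hts h)).2 huT
      refine ⟨insert u t, ?_, ?_, ?_⟩
      · intro x hx
        rcases Finset.mem_insert.1 hx with rfl | hx
        · exact hus
        · exact (Finset.sdiff_subset (hts hx))
      · -- independence
        have hnadj : ∀ b ∈ t, ¬ G.Adj u b := by
          intro b hb hadj
          have hbs : b ∈ s \ T := hts hb
          exact (Finset.mem_sdiff.1 hbs).2 (Finset.mem_insert_of_mem
            (Finset.mem_inter.2 ⟨(SimpleGraph.mem_neighborFinset _ _ _).2 hadj,
              (Finset.mem_sdiff.1 hbs).1⟩))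
        intro a ha b hb hab hadj
        rcases Finset.mem_insert.1 ha with ha' | ha
        · rcases Finset.mem_insert.1 hb with hb' | hb
          · exact hab (ha'.trans hb'.symm)
          · exact hnadj b hb (ha' ▸ hadj)
        · rcases Finset.mem_insert.1 hb with hb' | hb
          · exact hnadj a ha (G.adj_symm (hb' ▸ hadj))
          · exact hind a ha b hb hab hadj
      · -- sum bound
        have hsplit : ∑ v ∈ s, w v / g v
            = ∑ v ∈ s \ T, w v / g v + ∑ v ∈ T, w v / g v :=
          (Finset.sum_sdiff hTs).symm
        have hb1 : ∑ v ∈ s \ T, w v / g v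
            ≤ ∑ v ∈ s \ T, w v / (w v + ∑ x ∈ G.neighborFinset v ∩ (s \ T), w x) := by
          apply Finset.sum_le_sum
          intro v hv
          apply div_le_div_of_nonneg_left (hw v).le
          · exact add_pos_of_pos_of_nonneg (hw v) (Finset.sum_nonneg fun x _ => (hw x).le)
          · apply add_le_add_right
            apply Finset.sum_le_sum_of_subset_of_nonneg
            · exact Finset.inter_subset_inter le_rfl Finset.sdiff_subset
            · exact fun x _ _ => (hw x).le
        have hb2 : ∑ v ∈ T, w v / g v ≤ 1 := by
          have hsum : ∑ v ∈ T, w v = g u := by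
            have hnot : u ∉ G.neighborFinset u ∩ s := by
              simp [SimpleGraph.notMem_neighborFinset_self]
            rw [hT, Finset.sum_insert hnot]
          calc ∑ v ∈ T, w v / g v ≤ ∑ v ∈ T, w v / g u := by
                apply Finset.sum_le_sum
                intro v hv
                exact div_le_div_of_nonneg_left (hw v).le (hgpos u) (hmin v (hTs hv))
            _ = (∑ v ∈ T, w v) / g u := by rw [Finset.sum_div]
            _ = 1 := by rw [hsum, div_self (hgpos u).ne']
        have hcard : ((insert u t).card : ℝ) = t.card + 1 := by
          rw [Finset.card_insert_of_notMem hut]; push_cast; ring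
        rw [hsplit, hcard]
        exact add_le_add (hb1.trans hle) hb2

/-- Weighted Turán-type bound: for positive vertex weights `w`, with
`W_u = ∑_{v ∈ N(u) ∪ {u}} w v`, we have `∑_v w v / W_v ≤ α(G)`. -/
theorem stmt_0 {V : Type*} [Fintype V] [DecidableEq V] (G : SimpleGraph V)
    [DecidableRel G.Adj] (w : V → ℝ) (hw : ∀ v, 0 < w v) :
    ∑ v, w v / (∑ x ∈ insert v (G.neighborFinset v), w x) ≤ (indepNum G : ℝ) := by
  obtain ⟨t, -, hind, hle⟩ := caro_wei_key G w hw Finset.univ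
  have heq : ∑ v, w v / (∑ x ∈ insert v (G.neighborFinset v), w x)
      = ∑ v ∈ Finset.univ, w v / (w v + ∑ x ∈ G.neighborFinset v ∩ Finset.univ, w x) := by
    apply Finset.sum_congr rfl
    intro v _
    rw [Finset.inter_univ, Finset.sum_insert (SimpleGraph.notMem_neighborFinset_self G v)]
  have hmem : t.card ∈ {n | ∃ s : Finset V,
      (∀ a ∈ s, ∀ b ∈ s, a ≠ b → ¬ G.Adj a b) ∧ s.card = n} := ⟨t, hind, rfl⟩
  have hbdd : BddAbove {n | ∃ s : Finset V,
      (∀ a ∈ s, ∀ b ∈ s, a ≠ b → ¬ G.Adj a b) ∧ s.card = n} := by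
    refine ⟨Fintype.card V, ?_⟩
    rintro n ⟨s, -, rfl⟩
    exact s.card_le_univ
  have hcard : t.card ≤ indepNum G := le_csSup hbdd hmem
  calc ∑ v, w v / (∑ x ∈ insert v (G.neighborFinset v), w x)
      = _ := heq
    _ ≤ (t.card : ℝ) := hle
    _ ≤ (indepNum G : ℝ) := by exact_mod_cast hcard
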